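/- Let n ≥ 1 and let U = U₁ ⊗ U₂ ⊗ ⋯ ⊗ Uₙ and V = V₁ ⊗ V₂ ⊗ ⋯ ⊗ Vₙ, where each U_j and V_j is a 2 × 2 unitary matrix. Then C_LHST(U,V) = 1 − (1/n) Σ_{j=1}^n r_j, where r_j := (1/4)|Tr(V_j† U_j)|²; in particular, for each j the entanglement fidelity satisfies F_e^{(j)} = r_j. -/

import Mathlib

open Matrix Kronecker Complex

noncomputable section

/-- The Hilbert-Schmidt test cost `C_HST(U,V) = 1 - |Tr(V†U)|²/d²` for `d × d` matrices. -/
def CHSTd (d : ℕ) (U V : Matrix (Fin d) (Fin d) ℂ) : ℝ :=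
  1 - ‖(Vᴴ * U).trace‖ ^ 2 / (d : ℝ) ^ 2

/-- The Hilbert-Schmidt test cost for unitaries on `n` qubits (`d = 2^n`). -/
def CHST (n : ℕ) (U V : Matrix (Fin n → Fin 2) (Fin n → Fin 2) ℂ) : ℝ :=
  1 - ‖(Vᴴ * U).trace‖ ^ 2 / ((2 : ℝ) ^ n) ^ 2

/-- The local channel `E_j(ρ) = Tr_{j̄}[ W (ρ_(j) ⊗ I/2^(n-1)) W† ]`, where `ρ` is placed on
qubit `j`, the maximally mixed state on the other qubits, and the partial trace is over all
qubits except `j`.  (The sum over `r` double-counts the assignments of the qubits other than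
`j`, whence the extra factor `1/2`.) -/
def Ej (n : ℕ) (j : Fin n) (W : Matrix (Fin n → Fin 2) (Fin n → Fin 2) ℂ)
    (ρ : Matrix (Fin 2) (Fin 2) ℂ) : Matrix (Fin 2) (Fin 2) ℂ :=
  Matrix.of fun a b =>
    (1 / 2 ^ (n - 1) : ℂ) * (1 / 2) *
      ∑ r : Fin n → Fin 2, ∑ s : Fin n → Fin 2, ∑ t : Fin n → Fin 2,
        (if Function.update s j 0 = Function.update t j 0 then
          W (Function.update r j a) s * ρ (s j) (t j) * star (W (Function.update r j b) t)
        else 0)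

/-- The two-qubit maximally entangled state `|Φ₂⁺⟩ = (|00⟩+|11⟩)/√2`. -/
def phi2 : (Fin 2 × Fin 2) → ℂ := fun p => if p.1 = p.2 then ((1 / Real.sqrt 2 : ℝ) : ℂ) else 0

/-- The projector `|Φ₂⁺⟩⟨Φ₂⁺|`. -/
def phi2Proj : Matrix (Fin 2 × Fin 2) (Fin 2 × Fin 2) ℂ :=
  Matrix.of fun p q => if p.1 = p.2 ∧ q.1 = q.2 then (1 / 2 : ℂ) else 0

/-- `(E ⊗ id)(ρ)` for a map `E` on one-qubit matrices and a two-qubit matrix `ρ`. -/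
def tensorId (E : Matrix (Fin 2) (Fin 2) ℂ → Matrix (Fin 2) (Fin 2) ℂ)
    (ρ : Matrix (Fin 2 × Fin 2) (Fin 2 × Fin 2) ℂ) :
    Matrix (Fin 2 × Fin 2) (Fin 2 × Fin 2) ℂ :=
  Matrix.of fun p q => ∑ a : Fin 2, ∑ b : Fin 2,
    ρ (a, p.2) (b, q.2) * E (Matrix.single a b 1) p.1 q.1

/-- The entanglement fidelity `F_e^(j) = ⟨Φ₂⁺|(E_j ⊗ id)(|Φ₂⁺⟩⟨Φ₂⁺|)|Φ₂⁺⟩`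
(as a complex number), with `W = U V†`. -/
def FeC (n : ℕ) (j : Fin n) (U V : Matrix (Fin n → Fin 2) (Fin n → Fin 2) ℂ) : ℂ :=
  star phi2 ⬝ᵥ (tensorId (Ej n j (U * Vᴴ)) phi2Proj).mulVec phi2

/-- The entanglement fidelity `F_e^(j)` (a real number). -/
def Fe (n : ℕ) (j : Fin n) (U V : Matrix (Fin n → Fin 2) (Fin n → Fin 2) ℂ) : ℝ :=
  (FeC n j U V).re

/-- The local Hilbert-Schmidt cost for qubit `j`: `C_LHST^(j)(U,V) = 1 - F_e^(j)`. -/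
def CLHSTj (n : ℕ) (j : Fin n) (U V : Matrix (Fin n → Fin 2) (Fin n → Fin 2) ℂ) : ℝ :=
  1 - Fe n j U V

/-- The local Hilbert-Schmidt cost `C_LHST(U,V) = (1/n) Σ_j C_LHST^(j)(U,V)`. -/
def CLHST (n : ℕ) (U V : Matrix (Fin n → Fin 2) (Fin n → Fin 2) ℂ) : ℝ :=
  (1 / n : ℝ) * ∑ j : Fin n, CLHSTj n j U V

end

noncomputable section

/-- The `n`-fold tensor product `M₁ ⊗ M₂ ⊗ ⋯ ⊗ Mₙ` of one-qubit matrices, as a matrix on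
the `n`-qubit register indexed by `Fin n → Fin 2`. -/
def tensAll (n : ℕ) (M : Fin n → Matrix (Fin 2) (Fin 2) ℂ) :
    Matrix (Fin n → Fin 2) (Fin n → Fin 2) ℂ :=
  Matrix.of fun s t => ∏ j : Fin n, M j (s j) (t j)


section Helpers


variable {n : ℕ} (j : Fin n)

abbrev eS (j : Fin n) := Equiv.funSplitAt j (Fin 2)

lemma eS_symm_at_j (c : Fin 2) (u : {k : Fin n // k ≠ j} → Fin 2) : (eS j).symm (c, u) j = c := by
  simp [Equiv.funSplitAt, Equiv.piSplitAt]

lemma eS_symm_at_ne {k : Fin n} (h : k ≠ j) (c : Fin 2) (u : {k : Fin n // k ≠ j} → Fin 2) :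
    (eS j).symm (c, u) k = u ⟨k, h⟩ := by
  simp [Equiv.funSplitAt, Equiv.piSplitAt, h]

lemma update_eS_symm (c c' : Fin 2) (u : {k : Fin n // k ≠ j} → Fin 2) :
    Function.update ((eS j).symm (c, u)) j c' = (eS j).symm (c', u) := by
  funext k
  by_cases h : k = j
  · subst h; simp [Equiv.funSplitAt, Equiv.piSplitAt]
  · simp [Equiv.funSplitAt, Equiv.piSplitAt, Function.update_of_ne h, h]

lemma sum_split (f : (Fin n → Fin 2) → ℂ) :
    ∑ s, f s = ∑ c : Fin 2, ∑ u : {k : Fin n // k ≠ j} → Fin 2, f ((eS j).symm (c, u)) := by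
  rw [← Equiv.sum_comp (eS j).symm f, Fintype.sum_prod_type]

lemma tensAll_eS (M : Fin n → Matrix (Fin 2) (Fin 2) ℂ) (c c' : Fin 2)
    (u v : {k : Fin n // k ≠ j} → Fin 2) :
    tensAll n M ((eS j).symm (c, u)) ((eS j).symm (c', v)) =
      M j c c' * ∏ k : {k : Fin n // k ≠ j}, M k.1 (u k) (v k) := by
  show (∏ k : Fin n, M k ((eS j).symm (c, u) k) ((eS j).symm (c', v) k)) = _
  rw [Fintype.prod_eq_mul_prod_compl j]
  congr 1
  · rw [eS_symm_at_j, eS_symm_at_j]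
  · rw [Finset.prod_subtype (p := fun k => k ≠ j) ({j}ᶜ : Finset (Fin n)) (fun k => by simp)
      (fun k => M k ((eS j).symm (c, u) k) ((eS j).symm (c', v) k))]
    refine Finset.prod_congr rfl fun k _ => ?_
    rw [eS_symm_at_ne j k.2, eS_symm_at_ne j k.2]

lemma Ej_tens (M : Fin n → Matrix (Fin 2) (Fin 2) ℂ)
    (hM : ∀ k, (∑ a : Fin 2, ∑ b : Fin 2, M k a b * star (M k a b)) = 2) (x y : Fin 2) :
    Ej n j (tensAll n M) (Matrix.single x y 1) x y = M j x x * star (M j y y) := by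
  have h2 : (2 : ℂ) ^ (n - 1) ≠ 0 := pow_ne_zero _ two_ne_zero
  show (1 / 2 ^ (n - 1) : ℂ) * (1 / 2) * _ = _
  rw [sum_split j]
  simp_rw [sum_split j]
  simp only [update_eS_symm, EmbeddingLike.apply_eq_iff_eq, Prod.mk.injEq, eq_self_iff_true,
    true_and, eS_symm_at_j, Matrix.single, Matrix.of_apply, mul_ite, ite_mul, mul_one,
    mul_zero, zero_mul, ite_and, Finset.sum_ite_eq, Finset.mem_univ, if_true, tensAll_eS]
  simp only [Finset.sum_ite_irrel, Finset.sum_const_zero, Finset.sum_ite_eq, Finset.mem_univ,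
    if_true]
  have hP : (∑ x_2 : { k : Fin n // k ≠ j } → Fin 2, ∑ x_3 : { k : Fin n // k ≠ j } → Fin 2,
      (∏ k : { k : Fin n // k ≠ j }, M k.1 (x_2 k) (x_3 k)) *
        star (∏ k : { k : Fin n // k ≠ j }, M k.1 (x_2 k) (x_3 k))) = 2 ^ (n - 1) := by
    have h1 : ∀ x_2 : { k : Fin n // k ≠ j } → Fin 2,
        (∑ x_3 : { k : Fin n // k ≠ j } → Fin 2,
          (∏ k : { k : Fin n // k ≠ j }, M k.1 (x_2 k) (x_3 k)) *
            star (∏ k : { k : Fin n // k ≠ j }, M k.1 (x_2 k) (x_3 k))) =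
        ∏ k : { k : Fin n // k ≠ j }, ∑ b : Fin 2, M k.1 (x_2 k) b * star (M k.1 (x_2 k) b) := by
      intro x_2
      rw [Fintype.prod_sum]
      refine Finset.sum_congr rfl fun x_3 _ => ?_
      rw [star_prod, ← Finset.prod_mul_distrib]
    simp_rw [h1]
    have h3 := Fintype.prod_sum (fun (k : {k : Fin n // k ≠ j}) (a : Fin 2) =>
      ∑ b : Fin 2, M k.1 a b * star (M k.1 a b))
    rw [← h3]
    have hcard : Fintype.card {k : Fin n // k ≠ j} = n - 1 := by
      simp [Fintype.card_subtype_compl]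
    calc (∏ k : { k : Fin n // k ≠ j }, ∑ a : Fin 2, ∑ b : Fin 2,
            M k.1 a b * star (M k.1 a b))
        = ∏ _k : { k : Fin n // k ≠ j }, (2 : ℂ) := Finset.prod_congr rfl fun k _ => hM k.1
      _ = 2 ^ (n - 1) := by rw [Finset.prod_const, Finset.card_univ, hcard]
  simp_rw [star_mul', mul_mul_mul_comm, ← Finset.mul_sum]
  rw [Finset.sum_const, Finset.card_univ, Fintype.card_fin, nsmul_eq_mul]
  rw [hP]
  push_cast
  field_simp


lemma FeC_tens (U V : Matrix (Fin n → Fin 2) (Fin n → Fin 2) ℂ)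
    (M : Fin n → Matrix (Fin 2) (Fin 2) ℂ) (hUV : U * Vᴴ = tensAll n M)
    (hM : ∀ k, (∑ a : Fin 2, ∑ b : Fin 2, M k a b * star (M k a b)) = 2) :
    FeC n j U V = (1 / 4 : ℂ) * ((∑ x : Fin 2, M j x x) * star (∑ y : Fin 2, M j y y)) := by
  rw [FeC, hUV]
  simp only [dotProduct, Matrix.mulVec, tensorId, phi2, phi2Proj, Matrix.of_apply,
    Pi.star_apply, Fintype.sum_prod_type, Fin.sum_univ_two]
  simp only [Ej_tens j M hM]
  norm_num
  have hs : ((Real.sqrt 2 : ℝ) : ℂ) * ((Real.sqrt 2 : ℝ) : ℂ) = 2 := by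
    norm_cast
    exact Real.mul_self_sqrt (by norm_num)
  have h0 : ((Real.sqrt 2 : ℝ) : ℂ) ≠ 0 := by
    simpa using Real.sqrt_ne_zero'.2 (by norm_num)
  field_simp
  rw [sq, hs]
  ring


lemma sum_mul_star_self {A : Matrix (Fin 2) (Fin 2) ℂ} (hA : A ∈ Matrix.unitaryGroup (Fin 2) ℂ) :
    (∑ a : Fin 2, ∑ b : Fin 2, A a b * star (A a b)) = 2 := by
  have h1 : A * Aᴴ = 1 := by
    have := Matrix.mem_unitaryGroup_iff.mp hA
    rwa [Matrix.star_eq_conjTranspose] at this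
  calc (∑ a : Fin 2, ∑ b : Fin 2, A a b * star (A a b))
      = (A * Aᴴ).trace := by
        simp [Matrix.trace, Matrix.mul_apply, Matrix.diag, Matrix.conjTranspose_apply]
    _ = 2 := by rw [h1, Matrix.trace_one]; norm_num

lemma tens_mul (Us Vs : Fin n → Matrix (Fin 2) (Fin 2) ℂ) :
    (tensAll n Us) * (tensAll n Vs)ᴴ = tensAll n (fun k => Us k * (Vs k)ᴴ) := by
  ext s t
  simp only [Matrix.mul_apply, Matrix.conjTranspose_apply, tensAll, Matrix.of_apply]
  simp_rw [star_prod, ← Finset.prod_mul_distrib]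
  have h3 := Fintype.prod_sum (fun (k : Fin n) (c : Fin 2) => Us k (s k) c * star (Vs k (t k) c))
  rw [h3]

end Helpers

/-- If `U = U₁ ⊗ ⋯ ⊗ Uₙ` and `V = V₁ ⊗ ⋯ ⊗ Vₙ` with each `U_j`, `V_j` a
one-qubit unitary, then `C_LHST(U,V) = 1 − (1/n) Σ_j r_j` with
`r_j = (1/4)|Tr(V_j†U_j)|²`; in particular `F_e^(j) = r_j` for every `j`. -/
theorem stmt10 (n : ℕ) (hn : 1 ≤ n) (Us Vs : Fin n → Matrix (Fin 2) (Fin 2) ℂ)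
    (hU : ∀ j, Us j ∈ Matrix.unitaryGroup (Fin 2) ℂ)
    (hV : ∀ j, Vs j ∈ Matrix.unitaryGroup (Fin 2) ℂ) :
    CLHST n (tensAll n Us) (tensAll n Vs) =
      1 - (1 / n : ℝ) * ∑ j : Fin n, (1 / 4 : ℝ) * ‖((Vs j)ᴴ * Us j).trace‖ ^ 2 ∧
    ∀ j : Fin n, Fe n j (tensAll n Us) (tensAll n Vs) =
      (1 / 4 : ℝ) * ‖((Vs j)ᴴ * Us j).trace‖ ^ 2 := by
  have hM : ∀ k, (∑ a : Fin 2, ∑ b : Fin 2,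
      (Us k * (Vs k)ᴴ) a b * star ((Us k * (Vs k)ᴴ) a b)) = 2 := fun k =>
    sum_mul_star_self (mul_mem (hU k) (by
      rw [← Matrix.star_eq_conjTranspose]; exact Unitary.star_mem (hV k)))
  have hUV : tensAll n Us * (tensAll n Vs)ᴴ = tensAll n (fun k => Us k * (Vs k)ᴴ) :=
    tens_mul Us Vs
  have hFe : ∀ j : Fin n, Fe n j (tensAll n Us) (tensAll n Vs) =
      (1 / 4 : ℝ) * ‖((Vs j)ᴴ * Us j).trace‖ ^ 2 := by
    intro j
    rw [Fe, FeC_tens j _ _ _ hUV hM]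
    have ht : (∑ x : Fin 2, (Us j * (Vs j)ᴴ) x x) = ((Vs j)ᴴ * Us j).trace := by
      rw [Matrix.trace_mul_comm]; rfl
    have hc : (((Vs j)ᴴ * Us j).trace * star (((Vs j)ᴴ * Us j).trace))
        = ((Complex.normSq (((Vs j)ᴴ * Us j).trace) : ℝ) : ℂ) := Complex.mul_conj _
    rw [ht, hc, show (1/4 : ℂ) = ((1/4 : ℝ) : ℂ) by norm_num,
      ← Complex.ofReal_mul, Complex.ofReal_re, Complex.normSq_eq_norm_sq]
  refine ⟨?_, hFe⟩
  have hn0 : (n : ℝ) ≠ 0 := Nat.cast_ne_zero.mpr (by omega)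
  rw [CLHST]
  simp only [CLHSTj, hFe]
  rw [Finset.sum_sub_distrib, mul_sub, Finset.sum_const, Finset.card_univ, Fintype.card_fin,
    nsmul_eq_mul, mul_one, one_div, inv_mul_cancel₀ hn0, inv_eq_one_div]

end
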